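/- Let X₁, …, X_m be subsets of the vertex set of a connected graph G with m ≥ 2 and d_G(X_i, X_j) ≥ D ≥ 6 for all i ≠ j ∈ [m]. For each i ∈ [m], let Q_i be a shortest path in G from X_i to ⋃_{j≠i} X_j, and let Z be the set of vertices of G at distance at least 2 from ⋃_{i∈[m]} X_i. Then the subpaths Q_i′ of Q_i consisting of the vertices at positions 2 through (D−2)/2 along Q_i (from the X_i end) are pairwise vertex-disjoint, lie entirely in Z, and hence |Z| ≥ ((D−4)/2) · m. -/

import Mathlib

open Set

/-! ## List colorings -/

/-- `φ` is a proper coloring of `G` from the lists `L`. -/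
def HasLColoring {V : Type} (G : SimpleGraph V) (L : V → Finset ℕ) : Prop :=
  ∃ φ : V → ℕ, (∀ v, φ v ∈ L v) ∧ ∀ ⦃u v⦄, G.Adj u v → φ u ≠ φ v

/-- `φ : V → ℕ` restricts to a proper `L`-coloring of the subgraph `H`. -/
def IsLColoringOn {V : Type} {G : SimpleGraph V} (H : G.Subgraph) (L : V → Finset ℕ)
    (φ : V → ℕ) : Prop :=
  (∀ v ∈ H.verts, φ v ∈ L v) ∧ ∀ ⦃u v⦄, H.Adj u v → φ u ≠ φ v

/-- An `L`-coloring `φ` of `T` extends to an `L`-coloring of `H`. -/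
def ExtendsToIn {V : Type} {G : SimpleGraph V} (T H : G.Subgraph) (L : V → Finset ℕ)
    (φ : V → ℕ) : Prop :=
  ∃ ψ : V → ℕ, IsLColoringOn H L ψ ∧ ∀ v ∈ T.verts, ψ v = φ v

/-- `H` is `T`-critical with respect to `L` (inside the ambient graph `G`):
`T` is a proper subgraph of `H` and for every proper subgraph `H'` of `H` containing `T`
there is an `L`-coloring of `T` that extends to `H'` but not to `H`. -/
def IsCriticalIn {V : Type} {G : SimpleGraph V} (L : V → Finset ℕ) (T H : G.Subgraph) : Prop :=
  T ≤ H ∧ T ≠ H ∧ ∀ H' : G.Subgraph, T ≤ H' → H' < H →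
    ∃ φ : V → ℕ, IsLColoringOn T L φ ∧ ExtendsToIn T H' L φ ∧ ¬ ExtendsToIn T H L φ

/-! ## Plane embeddings -/

/-- A plane embedding of the graph `G`: vertices are distinct points of `ℝ²`, each edge is
a simple arc between the points of its two ends, arcs are internally disjoint from each other
and from the vertex points. -/
structure PlaneEmbedding {V : Type} (G : SimpleGraph V) where
  vtx : V → ℝ × ℝ
  vtx_inj : Function.Injective vtx
  arc : Sym2 V → ℝ → ℝ × ℝ
  arc_cont : ∀ e ∈ G.edgeSet, ContinuousOn (arc e) (Set.Icc 0 1)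
  arc_injOn : ∀ e ∈ G.edgeSet, Set.InjOn (arc e) (Set.Icc 0 1)
  arc_ends : ∀ u v : V, G.Adj u v →
    (arc s(u, v) 0 = vtx u ∧ arc s(u, v) 1 = vtx v) ∨
    (arc s(u, v) 0 = vtx v ∧ arc s(u, v) 1 = vtx u)
  arc_int_avoid_vtx : ∀ e ∈ G.edgeSet, ∀ w : V, vtx w ∉ arc e '' Set.Ioo 0 1
  arc_int_disjoint : ∀ e ∈ G.edgeSet, ∀ f ∈ G.edgeSet, e ≠ f →
    (arc e '' Set.Ioo 0 1) ∩ (arc f '' Set.Ioo 0 1) = ∅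

namespace PlaneEmbedding

variable {V : Type} {G : SimpleGraph V}

/-- The set of points of the plane used by the drawing of the subgraph `H`. -/
def subImage (ρ : PlaneEmbedding G) (H : G.Subgraph) : Set (ℝ × ℝ) :=
  (ρ.vtx '' H.verts) ∪ ⋃ e ∈ H.edgeSet, ρ.arc e '' Set.Icc 0 1

/-- The set of points of the plane used by the drawing of `G`. -/
def image (ρ : PlaneEmbedding G) : Set (ℝ × ℝ) := ρ.subImage ⊤

/-- A face of the embedding: a connected component of the complement of the drawing. -/
def IsFace (ρ : PlaneEmbedding G) (F : Set (ℝ × ℝ)) : Prop :=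
  ∃ x : ℝ × ℝ, x ∉ ρ.image ∧ F = connectedComponentIn (ρ.image)ᶜ x

/-- The outer (infinite) face: the unbounded face. -/
def IsOuterFace (ρ : PlaneEmbedding G) (F : Set (ℝ × ℝ)) : Prop :=
  ρ.IsFace F ∧ ¬ Bornology.IsBounded F

/-- The boundary graph `∂_G f` of a face `f`: the subgraph of `G` consisting of the
vertices and edges drawn on the boundary of the face. -/
def faceBoundary (ρ : PlaneEmbedding G) (F : Set (ℝ × ℝ)) : G.Subgraph where
  verts := {v | ρ.vtx v ∈ closure F}
  Adj u v := G.Adj u v ∧ ρ.arc s(u, v) '' Set.Icc 0 1 ⊆ closure F ∧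
    ρ.vtx u ∈ closure F ∧ ρ.vtx v ∈ closure F
  adj_sub h := h.1
  edge_vert h := h.2.2.1
  symm := by
    constructor
    intro u v h
    exact ⟨h.1.symm, by rw [Sym2.eq_swap]; exact h.2.1, h.2.2.2, h.2.2.1⟩

/-- Vertices drawn inside a bounded region enclosed by the drawing of `J`. -/
def enclosedVerts (ρ : PlaneEmbedding G) (J : G.Subgraph) : Set V :=
  {w | ρ.vtx w ∉ ρ.subImage J ∧
    Bornology.IsBounded (connectedComponentIn (ρ.subImage J)ᶜ (ρ.vtx w))}

end PlaneEmbedding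

/-! ## Restricted faces and sets -/

/-- `P` is a path of length at most one (a single vertex or a single edge), as a subgraph. -/
def IsShortPathSubgraph {V : Type} (G : SimpleGraph V) (P : G.Subgraph) : Prop :=
  (∃ u, P.verts = {u} ∧ P.edgeSet = ∅) ∨
  (∃ u v, G.Adj u v ∧ P.verts = {u, v} ∧ P.edgeSet = {s(u, v)})

/-- A face `F` is restricted under `L`: there is a path `P` of length at most one in the
boundary of `F` such that every boundary vertex off `P` has a list of size at least `3`,
vertices of `P` have nonempty lists, and `P` has an `L`-coloring. -/
def FaceRestricted {V : Type} {G : SimpleGraph V} (ρ : PlaneEmbedding G)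
    (F : Set (ℝ × ℝ)) (L : V → Finset ℕ) : Prop :=
  ∃ P : G.Subgraph, P ≤ ρ.faceBoundary F ∧ IsShortPathSubgraph G P ∧
    (∀ v ∈ (ρ.faceBoundary F).verts, v ∉ P.verts → 3 ≤ (L v).card) ∧
    (∀ v ∈ P.verts, 1 ≤ (L v).card) ∧
    ∃ φ : V → ℕ, IsLColoringOn P L φ

/-- A set `X` of vertices is restricted under `L`: there are a face `F` and a path `P` of
length at most one in the boundary of `F` such that every vertex of `X` has a list of size at
least `3`, vertices of `P` have nonempty lists, and `P` has an `L`-coloring. -/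
def SetRestricted {V : Type} {G : SimpleGraph V} (ρ : PlaneEmbedding G)
    (L : V → Finset ℕ) (X : Set V) : Prop :=
  ∃ F : Set (ℝ × ℝ), ρ.IsFace F ∧
    ∃ P : G.Subgraph, P ≤ ρ.faceBoundary F ∧ IsShortPathSubgraph G P ∧
      (∀ v ∈ X, 3 ≤ (L v).card) ∧
      (∀ v ∈ P.verts, 1 ≤ (L v).card) ∧
      ∃ φ : V → ℕ, IsLColoringOn P L φ

/-! ## Canvases -/

/-- `(G, S, L)` (together with the embedding `ρ` whose outer face is `F`) is a canvas. -/
def IsCanvas {V : Type} {G : SimpleGraph V} (ρ : PlaneEmbedding G) (F : Set (ℝ × ℝ))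
    (S : G.Subgraph) (L : V → Finset ℕ) : Prop :=
  G.Connected ∧ ρ.IsOuterFace F ∧ S ≤ ρ.faceBoundary F ∧
  (∀ v, v ∉ (ρ.faceBoundary F).verts → 5 ≤ (L v).card) ∧
  (∀ v, v ∉ S.verts → 3 ≤ (L v).card) ∧
  ∃ φ : V → ℕ, IsLColoringOn S L φ

/-- An essential cutvertex: `v` is a cutvertex, and whenever `v` divides `G` into
`G₁, G₂ ≠ G` with `V(G₁) ∩ V(G₂) = {v}` and `G₁ ∪ G₂ = G`, both sides meet `S` off `v`. -/
def EssentialCutvertex {V : Type} (G : SimpleGraph V) (S : G.Subgraph) (v : V) : Prop :=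
  (∃ G₁ G₂ : G.Subgraph, G₁ ⊔ G₂ = ⊤ ∧ G₁ ≠ ⊤ ∧ G₂ ≠ ⊤ ∧ G₁.verts ∩ G₂.verts = {v}) ∧
  ∀ G₁ G₂ : G.Subgraph, G₁ ⊔ G₂ = ⊤ → G₁ ≠ ⊤ → G₂ ≠ ⊤ → G₁.verts ∩ G₂.verts = {v} →
    (S.verts ∩ (G₁.verts \ {v})).Nonempty ∧ (S.verts ∩ (G₂.verts \ {v})).Nonempty

/-- `P'` is a span with an exterior `E`: `P'` is a path whose ends have lists of size
less than five, and there is a path `δ` between the ends of `P'` lying in the outer walk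
whose interior contains neither a vertex of `S` nor an essential cutvertex;
`E = V(δ) ∪ Int(P' ∪ δ)`. -/
def IsSpanWithExt {V : Type} {G : SimpleGraph V} (ρ : PlaneEmbedding G) (F : Set (ℝ × ℝ))
    (S : G.Subgraph) (L : V → Finset ℕ) (P' : G.Subgraph) (E : Set V) : Prop :=
  ∃ (u v : V) (p : G.Walk u v), p.IsPath ∧ p.toSubgraph = P' ∧
    (L u).card < 5 ∧ (L v).card < 5 ∧
    ∃ d : G.Walk u v, d.IsPath ∧ d.toSubgraph ≤ ρ.faceBoundary F ∧
      (∀ w ∈ d.support, w ≠ u → w ≠ v → w ∉ S.verts ∧ ¬ EssentialCutvertex G S w) ∧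
      E = {w | w ∈ d.support} ∪ ρ.enclosedVerts (P' ⊔ d.toSubgraph)

/-- A vertex is superfluous if it is not in `S` and lies in the exterior of some span on
three vertices. -/
def Superfluous {V : Type} {G : SimpleGraph V} (ρ : PlaneEmbedding G) (F : Set (ℝ × ℝ))
    (S : G.Subgraph) (L : V → Finset ℕ) (v : V) : Prop :=
  v ∉ S.verts ∧ ∃ (P' : G.Subgraph) (E : Set V),
    IsSpanWithExt ρ F S L P' E ∧ P'.verts.ncard = 3 ∧ v ∈ E

/-- The vertex set of the truncation `G*`: the substantial (non-superfluous) vertices. -/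
def truncVerts {V : Type} {G : SimpleGraph V} (ρ : PlaneEmbedding G) (F : Set (ℝ × ℝ))
    (S : G.Subgraph) (L : V → Finset ℕ) : Set V :=
  {v | ¬ Superfluous ρ F S L v}

/-- `S` is a disjoint union of paths: max degree at most two and no cycles. -/
def IsDisjointUnionOfPaths {V : Type} {G : SimpleGraph V} (S : G.Subgraph) : Prop :=
  (∀ v ∈ S.verts, (S.neighborSet v).ncard ≤ 2) ∧
  ∀ (u : V) (w : G.Walk u u), w.IsCycle → ¬ w.toSubgraph ≤ S

/-! ## Steiner trees -/

/-- `T` is an optimal Steiner tree for `S` in `G`: a connected subgraph containing `S`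
with as few edges as possible. -/
def IsOptimalSteinerTree {V : Type} (G : SimpleGraph V) (S : Set V) (T : G.Subgraph) : Prop :=
  T.Connected ∧ S ⊆ T.verts ∧
  ∀ T' : G.Subgraph, T'.Connected → S ⊆ T'.verts → T.edgeSet.ncard ≤ T'.edgeSet.ncard

/-- A branch vertex of `T` with respect to `S`: a vertex of `T` that is in `S` or does not
have degree exactly two in `T`. These are the vertices kept when suppressing degree-two
vertices not in `S`. -/
def IsBranchVertex {V : Type} {G : SimpleGraph V} (T : G.Subgraph) (S : Set V) (v : V) : Prop :=
  v ∈ T.verts ∧ (v ∈ S ∨ (T.neighborSet v).ncard ≠ 2)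

/-- A seam of `T` (with respect to `S`): a nontrivial path in `T` whose ends are branch
vertices and whose internal vertices are not branch vertices. -/
def IsSeamWalk {V : Type} {G : SimpleGraph V} (T : G.Subgraph) (S : Set V) {u v : V}
    (p : G.Walk u v) : Prop :=
  p.IsPath ∧ 1 ≤ p.length ∧ p.toSubgraph ≤ T ∧
  IsBranchVertex T S u ∧ IsBranchVertex T S v ∧
  ∀ w ∈ p.support, w ≠ u → w ≠ v → ¬ IsBranchVertex T S w

private lemma walkPrefix {V : Type} {G : SimpleGraph V} {u v : V} (p : G.Walk u v) (k : ℕ) :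
    ∃ q : G.Walk u (p.getVert k), q.length ≤ k := by
  induction p generalizing k with
  | nil =>
      refine ⟨SimpleGraph.Walk.nil.copy rfl ?_, by simp⟩
      exact (SimpleGraph.Walk.getVert_of_length_le _ (by simp)).symm
  | cons h q ih =>
      cases k with
      | zero =>
          exact ⟨SimpleGraph.Walk.nil.copy rfl (SimpleGraph.Walk.getVert_zero _).symm, by simp⟩
      | succ n =>
          obtain ⟨r, hr⟩ := ih n
          refine ⟨(r.cons h).copy rfl (SimpleGraph.Walk.getVert_cons_succ q h).symm, ?_⟩
          simpa using Nat.succ_le_succ hr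

private lemma walkSuffix {V : Type} {G : SimpleGraph V} {u v : V} (p : G.Walk u v) (k : ℕ) :
    ∃ q : G.Walk (p.getVert k) v, q.length ≤ p.length - k := by
  induction p generalizing k with
  | nil =>
      refine ⟨SimpleGraph.Walk.nil.copy ?_ rfl, by simp⟩
      exact (SimpleGraph.Walk.getVert_of_length_le _ (by simp)).symm
  | cons h q ih =>
      cases k with
      | zero =>
          exact ⟨(SimpleGraph.Walk.cons h q).copy (SimpleGraph.Walk.getVert_zero _).symm rfl,
            by simp⟩
      | succ n =>
          obtain ⟨r, hr⟩ := ih n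
          refine ⟨r.copy (SimpleGraph.Walk.getVert_cons_succ q h).symm rfl, ?_⟩
          simpa [SimpleGraph.Walk.length_cons] using hr

private lemma getVertInj {V : Type} {G : SimpleGraph V} {u v : V} {p : G.Walk u v}
    (hp : p.IsPath) : ∀ {k l : ℕ}, k ≤ p.length → l ≤ p.length →
      p.getVert k = p.getVert l → k = l := by
  induction p with
  | nil => intro k l hk hl _; simp at hk hl; omega
  | cons h q ih =>
      intro k l hk hl he
      rw [SimpleGraph.Walk.cons_isPath_iff] at hp
      cases k with
      | zero =>
          cases l with
          | zero => rfl
          | succ n =>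
              exfalso
              apply hp.2
              rw [SimpleGraph.Walk.mem_support_iff_exists_getVert]
              refine ⟨n, ?_, ?_⟩
              · rw [← SimpleGraph.Walk.getVert_cons_succ q h, ← he,
                  SimpleGraph.Walk.getVert_zero]
              · simpa [SimpleGraph.Walk.length_cons] using hl
      | succ n =>
          cases l with
          | zero =>
              exfalso
              apply hp.2
              rw [SimpleGraph.Walk.mem_support_iff_exists_getVert]
              refine ⟨n, ?_, ?_⟩
              · rw [← SimpleGraph.Walk.getVert_cons_succ q h, he,
                  SimpleGraph.Walk.getVert_zero]
              · simpa [SimpleGraph.Walk.length_cons] using hk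
          | succ n' =>
              have := ih hp.1 (k := n) (l := n')
                (by simpa [SimpleGraph.Walk.length_cons] using hk)
                (by simpa [SimpleGraph.Walk.length_cons] using hl)
                (by simpa [SimpleGraph.Walk.getVert_cons_succ] using he)
              omega

/-- Let `X₁, …, X_m` (with `m ≥ 2`) be subsets of the vertex set of a
connected graph `G` with `d_G(X_i, X_j) ≥ D ≥ 6` for `i ≠ j`, where `D` is even. For each
`i` let `Q_i` be a shortest path from `X_i` to `⋃_{j ≠ i} X_j`, and let `Z` be the set of
vertices at distance at least `2` from `⋃ᵢ X_i`. Then the subpaths `Q_i'` of `Q_i` given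
by the vertices at positions `2` through `(D-2)/2` along `Q_i` are pairwise vertex-disjoint,
lie entirely in `Z`, and hence `|Z| ≥ ((D-4)/2) ⬝ m`. -/
theorem far_apart_sets_many_distant_vertices
    {V : Type} [Fintype V] (G : SimpleGraph V) (hconn : G.Connected)
    (m : ℕ) (hm : 2 ≤ m) (X : Fin m → Set V)
    (D : ℕ) (hD6 : 6 ≤ D) (hDeven : Even D)
    (hdist : ∀ i j, i ≠ j → ∀ x ∈ X i, ∀ y ∈ X j, ∀ w : G.Walk x y, D ≤ w.length)
    (a b : Fin m → V) (ha : ∀ i, a i ∈ X i) (hb : ∀ i, ∃ j, j ≠ i ∧ b i ∈ X j)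
    (Q : ∀ i, G.Walk (a i) (b i))
    (hQpath : ∀ i, (Q i).IsPath)
    (hQshort : ∀ i (x y : V), x ∈ X i → (∃ j, j ≠ i ∧ y ∈ X j) →
      ∀ w : G.Walk x y, (Q i).length ≤ w.length) :
    (∀ i j, i ≠ j →
        Disjoint ((Q i).getVert '' Set.Icc 2 ((D - 2) / 2))
          ((Q j).getVert '' Set.Icc 2 ((D - 2) / 2))) ∧
    (∀ i, (Q i).getVert '' Set.Icc 2 ((D - 2) / 2) ⊆
        {v | ∀ j, ∀ x ∈ X j, ∀ w : G.Walk v x, 2 ≤ w.length}) ∧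
    ((D - 4) / 2) * m ≤ ({v | ∀ j, ∀ x ∈ X j, ∀ w : G.Walk v x, 2 ≤ w.length} : Set V).ncard := by
  obtain ⟨c, hc⟩ := hDeven
  have hlen : ∀ i, D ≤ (Q i).length := by
    intro i
    obtain ⟨j, hj, hbj⟩ := hb i
    exact hdist i j (Ne.symm hj) (a i) (ha i) (b i) hbj (Q i)
  -- disjointness
  have hdisj : ∀ i j, i ≠ j →
      Disjoint ((Q i).getVert '' Set.Icc 2 ((D - 2) / 2))
        ((Q j).getVert '' Set.Icc 2 ((D - 2) / 2)) := by
    intro i j hij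
    rw [Set.disjoint_left]
    rintro v ⟨k, ⟨hk2, hkt⟩, rfl⟩ ⟨l, ⟨hl2, hlt⟩, hvl⟩
    obtain ⟨q, hq⟩ := walkPrefix (Q i) k
    obtain ⟨r, hr⟩ := walkPrefix (Q j) l
    have := hdist i j hij (a i) (ha i) (a j) (ha j) (q.append (r.copy rfl hvl).reverse)
    rw [SimpleGraph.Walk.length_append, SimpleGraph.Walk.length_reverse,
      SimpleGraph.Walk.length_copy] at this
    omega
  -- in Z
  have hZ : ∀ i, (Q i).getVert '' Set.Icc 2 ((D - 2) / 2) ⊆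
      {v | ∀ j, ∀ x ∈ X j, ∀ w : G.Walk v x, 2 ≤ w.length} := by
    rintro i v ⟨k, ⟨hk2, hkt⟩, rfl⟩ j x hx w
    by_contra hw
    push_neg at hw
    obtain ⟨q, hq⟩ := walkPrefix (Q i) k
    obtain ⟨r, hr⟩ := walkSuffix (Q i) k
    by_cases hij : j = i
    · subst hij
      have h2 := hQshort j x (b j) hx (hb j) (w.reverse.append r)
      rw [SimpleGraph.Walk.length_append, SimpleGraph.Walk.length_reverse] at h2
      have := hlen j
      omega
    · have h2 := hdist i j (fun hh => hij hh.symm) (a i) (ha i) x hx (q.append w)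
      rw [SimpleGraph.Walk.length_append] at h2
      omega
  refine ⟨hdisj, hZ, ?_⟩
  -- cardinality
  set Z := ({v | ∀ j, ∀ x ∈ X j, ∀ w : G.Walk v x, 2 ≤ w.length} : Set V) with hZdef
  set f : Fin m × Fin ((D - 4) / 2) → V := fun pr => (Q pr.1).getVert ((pr.2 : ℕ) + 2) with hf
  have hmem : ∀ (i : Fin m) (r : Fin ((D - 4) / 2)),
      (Q i).getVert ((r : ℕ) + 2) ∈ (Q i).getVert '' Set.Icc 2 ((D - 2) / 2) := by
    intro i r
    exact ⟨(r : ℕ) + 2, ⟨by omega, by have := r.isLt; omega⟩, rfl⟩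
  have hinj : Function.Injective f := by
    rintro ⟨i, r⟩ ⟨j, s⟩ he
    simp only [hf] at he
    by_cases hij : i = j
    · subst hij
      have hr2 : (r : ℕ) + 2 ≤ (Q i).length := by have := r.isLt; have := hlen i; omega
      have hs2 : (s : ℕ) + 2 ≤ (Q i).length := by have := s.isLt; have := hlen i; omega
      have := getVertInj (hQpath i) hr2 hs2 he
      exact Prod.ext rfl (Fin.ext (Nat.add_right_cancel this))
    · exact absurd (hmem j s) (Set.disjoint_left.mp (hdisj i j hij) (he ▸ hmem i r))
  have hsub : Set.range f ⊆ Z := by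
    rintro _ ⟨⟨i, r⟩, rfl⟩
    exact hZ i (hmem i r)
  calc ((D - 4) / 2) * m = Nat.card (Fin m × Fin ((D - 4) / 2)) := by
        simp [Nat.card_eq_fintype_card, mul_comm]
    _ = (Set.range f).ncard := by
        rw [← Nat.card_coe_set_eq, Nat.card_range_of_injective hinj]
    _ ≤ Z.ncard := Set.ncard_le_ncard hsub (Set.toFinite Z)
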